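/- arXiv:1409.2344 — 2 statements merged into one kernel-verified Lean document; each statement's English description precedes it below -/
import Mathlib

section
/- Let κ: ℝ^d × ℝ^d → ℝ be a kernel that is bounded in absolute value by B and satisfies |κ(x,y) − κ(x',y')| ≤ C · max{‖x − x'‖, ‖y − y'‖} for all arguments, for constants B, C. Let X̃, X' be n×d matrices (n ≥ 2) and Ỹ, Y' be m×d matrices (m ≥ 2), and let S_X ⊆ {1,…,n} and S_Y ⊆ {1,…,m}. Then | U_{n,m}(X̃, Ỹ) − U_{n,m}(X', Y') | ≤ 4C ( max_{i ∈ S_X} ‖X̃_i − X'_i‖ + max_{k ∈ S_Y} ‖Ỹ_k − Y'_k‖ ) + 8B ( (n − |S_X|)/n + (m − |S_Y|)/m ), where X̃_i, X'_i denote the i-th rows and Ỹ_k, Y'_k the k-th rows (with the convention that a maximum over an empty set is 0). -/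
open MeasureTheory ProbabilityTheory Matrix Filter Topology

noncomputable section

/-- Euclidean (ℓ²) norm of a vector in `Fin k → ℝ`. -/
def l2norm {k : ℕ} (x : Fin k → ℝ) : ℝ := Real.sqrt (∑ i, x i ^ 2)

/-- `2 → ∞` norm of a matrix: the maximum Euclidean norm of its rows. -/
def norm2inf {n d : ℕ} (M : Matrix (Fin n) (Fin d) ℝ) : ℝ := ⨆ i, l2norm (M i)

/-- Frobenius norm of a matrix. -/
def frobNorm {n m : ℕ} (M : Matrix (Fin n) (Fin m) ℝ) : ℝ :=
  Real.sqrt (∑ i, ∑ j, M i j ^ 2)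

/-- The two-sample `U`-statistic associated with a kernel `κ`:
`U_{n,m}(X,Y) = (n(n−1))⁻¹ Σ_{i≠j} κ(X_i,X_j) − 2(mn)⁻¹ Σ_i Σ_k κ(X_i,Y_k)
  + (m(m−1))⁻¹ Σ_{k≠l} κ(Y_k,Y_l)`. -/
def Ustat {d n m : ℕ} (κ : (Fin d → ℝ) → (Fin d → ℝ) → ℝ)
    (X : Matrix (Fin n) (Fin d) ℝ) (Y : Matrix (Fin m) (Fin d) ℝ) : ℝ :=
  ((n : ℝ) * ((n : ℝ) - 1))⁻¹ * ∑ i, ∑ j ∈ Finset.univ.erase i, κ (X i) (X j)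
    - 2 * ((m : ℝ) * (n : ℝ))⁻¹ * ∑ i, ∑ k, κ (X i) (Y k)
    + ((m : ℝ) * ((m : ℝ) - 1))⁻¹ * ∑ k, ∑ l ∈ Finset.univ.erase k, κ (Y k) (Y l)

/-- The two-sample `V`-statistic associated with a kernel `κ`. -/
def Vstat {d n m : ℕ} (κ : (Fin d → ℝ) → (Fin d → ℝ) → ℝ)
    (X : Matrix (Fin n) (Fin d) ℝ) (Y : Matrix (Fin m) (Fin d) ℝ) : ℝ :=
  (((n : ℝ)) ^ 2)⁻¹ * ∑ i, ∑ j, κ (X i) (X j)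
    - 2 * ((m : ℝ) * (n : ℝ))⁻¹ * ∑ i, ∑ k, κ (X i) (Y k)
    + (((m : ℝ)) ^ 2)⁻¹ * ∑ k, ∑ l, κ (Y k) (Y l)

/-- A kernel is radial if `κ(x,y)` depends only on `‖x − y‖`. -/
def IsRadial {d : ℕ} (κ : (Fin d → ℝ) → (Fin d → ℝ) → ℝ) : Prop :=
  ∃ φ : ℝ → ℝ, ∀ x y, κ x y = φ (l2norm (x - y))

/-- A `d × d` real matrix is orthogonal. -/
def Orth {d : ℕ} (W : Matrix (Fin d) (Fin d) ℝ) : Prop := Wᵀ * W = 1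

/-- The second moment matrix `E[X₁ X₁ᵀ]` of a distribution `F` on `ℝ^d`. -/
def secondMoment {d : ℕ} (F : Measure (Fin d → ℝ)) : Matrix (Fin d) (Fin d) ℝ :=
  Matrix.of fun i j => ∫ x, x i * x j ∂F

/-- Assumption 1: the second moment matrix `E[X₁X₁ᵀ]` has rank `d` with `d` distinct
(nonzero, hence positive) eigenvalues. -/
def Assumption1 {d : ℕ} (F : Measure (Fin d → ℝ)) : Prop :=
  ∃ (W : Matrix (Fin d) (Fin d) ℝ) (lam : Fin d → ℝ),
    Orth W ∧ (∀ i, 0 < lam i) ∧ Function.Injective lam ∧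
      secondMoment F = W * Matrix.diagonal lam * Wᵀ

/-- `W` is the orthogonal matrix of eigenvectors in an eigendecomposition
`M = W S Wᵀ` with the eigenvalues sorted in decreasing order. -/
def IsEigenmatrix {d : ℕ} (M W : Matrix (Fin d) (Fin d) ℝ) : Prop :=
  Orth W ∧ ∃ lam : Fin d → ℝ, Antitone lam ∧ M = W * Matrix.diagonal lam * Wᵀ

/-- `UA` (n×d, orthonormal columns) and `SA` (d×d diagonal) are the matrices of the top `d`
eigenvectors/eigenvalues of `|A| = (AᵀA)^{1/2}` for a symmetric matrix `A`:
if `A = Σ λ_i u_i u_iᵀ` is an eigendecomposition of `A`, then `|A| = Σ |λ_i| u_i u_iᵀ`,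
and we select the `d` eigenvalues of largest absolute value, in decreasing order. -/
def IsSpectralTopd {n d : ℕ} (A : Matrix (Fin n) (Fin n) ℝ)
    (UA : Matrix (Fin n) (Fin d) ℝ) (SA : Matrix (Fin d) (Fin d) ℝ) : Prop :=
  ∃ (lam : Fin n → ℝ) (u : Fin n → (Fin n → ℝ)) (e : Fin d → Fin n),
    (∀ i j, u i ⬝ᵥ u j = if i = j then (1 : ℝ) else 0) ∧
    (∀ v w, A v w = ∑ i, lam i * u i v * u i w) ∧
    Function.Injective e ∧
    (∀ (i : Fin d) (j : Fin n), j ∉ Set.range e → |lam j| ≤ |lam (e i)|) ∧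
    (∀ i j : Fin d, i ≤ j → |lam (e j)| ≤ |lam (e i)|) ∧
    SA = Matrix.diagonal (fun i => |lam (e i)|) ∧
    (∀ v i, UA v i = u (e i) v)

/-- `Xh` is the adjacency spectral embedding of `A` into `ℝ^d`, i.e. `Xh = U_A S_A^{1/2}`. -/
def IsASE {n d : ℕ} (A : Matrix (Fin n) (Fin n) ℝ)
    (Xh : Matrix (Fin n) (Fin d) ℝ) : Prop :=
  ∃ UA SA, IsSpectralTopd A UA SA ∧ ∀ v i, Xh v i = UA v i * Real.sqrt (SA i i)

/-- Entrywise square root of a diagonal matrix (`S^{1/2}`). -/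
def sqrtDiag {d : ℕ} (S : Matrix (Fin d) (Fin d) ℝ) : Matrix (Fin d) (Fin d) ℝ :=
  Matrix.diagonal fun i => Real.sqrt (S i i)

/-- Entrywise inverse square root of a diagonal matrix (`S^{-1/2}`). -/
def invSqrtDiag {d : ℕ} (S : Matrix (Fin d) (Fin d) ℝ) : Matrix (Fin d) (Fin d) ℝ :=
  Matrix.diagonal fun i => (Real.sqrt (S i i))⁻¹

/-- `Ω` is a compact subset of `ℝ^d` such that all pairwise inner products of elements
of `Ω` lie in `[0,1]`. -/
def GoodOmega {d : ℕ} (Ω : Set (Fin d → ℝ)) : Prop :=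
  IsCompact Ω ∧ ∀ x ∈ Ω, ∀ y ∈ Ω, x ⬝ᵥ y ∈ Set.Icc (0 : ℝ) 1

instance matrixMeasurableSpace {m n α : Type*} [MeasurableSpace α] :
    MeasurableSpace (Matrix m n α) :=
  inferInstanceAs (MeasurableSpace (m → n → α))

/-- `(X, A) ~ RDPG(α^{1/2} F)` on `n` vertices: the rows of `X` are i.i.d. with
distribution `F`; `A` is symmetric, `{0,1}`-valued with zero diagonal; and conditionally on
`X` the above-diagonal entries are independent Bernoulli with
`P(A_ij = 1 | X) = α ⟨X_i, X_j⟩` (encoded through conditional expectations of all finite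
products of above-diagonal entries).  Take `α = 1` for the non-sparse model. -/
structure IsRDPG {Θ : Type*} [MeasurableSpace Θ] (μ : Measure Θ) {d n : ℕ}
    (F : Measure (Fin d → ℝ)) (α : ℝ)
    (X : Θ → Fin n → (Fin d → ℝ)) (A : Θ → Matrix (Fin n) (Fin n) ℝ) : Prop where
  measX : ∀ i, Measurable fun θ => X θ i
  lawX : ∀ i, μ.map (fun θ => X θ i) = F
  indepX : iIndepFun (fun i θ => X θ i) μ
  measA : Measurable A
  symmA : ∀ θ, (A θ)ᵀ = A θ
  valA : ∀ θ i j, A θ i j = 0 ∨ A θ i j = 1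
  diagA : ∀ θ i, A θ i i = 0
  condA : ∀ S : Finset (Fin n × Fin n), (∀ p ∈ S, p.1 < p.2) →
      μ[(fun θ => ∏ p ∈ S, A θ p.1 p.2) | MeasurableSpace.comap X inferInstance]
        =ᵐ[μ] fun θ => ∏ p ∈ S, α * (X θ p.1 ⬝ᵥ X θ p.2)

/-- A sequence of random dot product graphs `(X_n, A_n) ~ RDPG(α_n^{1/2} F)` defined on a common
probability space, where `X_n` consists of the first `n` terms of an i.i.d. `F` sequence `ξ` and,
conditionally on the latent positions, the above-diagonal entries of `A_n` are independent
Bernoulli with success probabilities `α_n ⟨ξ_i, ξ_j⟩`.  Take `α = 1` for the non-sparse model. -/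
structure IsRDPGSeq {Θ : Type*} [MeasurableSpace Θ] (μ : Measure Θ) {d : ℕ}
    (F : Measure (Fin d → ℝ)) (α : ℕ → ℝ)
    (ξ : ℕ → Θ → (Fin d → ℝ)) (A : (n : ℕ) → Θ → Matrix (Fin n) (Fin n) ℝ) : Prop where
  measX : ∀ i, Measurable (ξ i)
  lawX : ∀ i, μ.map (ξ i) = F
  indepX : iIndepFun ξ μ
  measA : ∀ n, Measurable (A n)
  symmA : ∀ n θ, (A n θ)ᵀ = A n θ
  valA : ∀ n θ i j, A n θ i j = 0 ∨ A n θ i j = 1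
  diagA : ∀ n θ i, A n θ i i = 0
  condA : ∀ n, ∀ S : Finset (Fin n × Fin n), (∀ p ∈ S, p.1 < p.2) →
      μ[(fun θ => ∏ p ∈ S, A n θ p.1 p.2) |
          MeasurableSpace.comap (fun θ (i : Fin n) => ξ i θ) inferInstance]
        =ᵐ[μ] fun θ => ∏ p ∈ S, α n * (ξ (p.1 : ℕ) θ ⬝ᵥ ξ (p.2 : ℕ) θ)

/-- The `n × d` matrix whose rows are the first `n` latent positions `ξ_0(θ),…,ξ_{n−1}(θ)`. -/
def sampleMatrix {Θ : Type*} {d : ℕ} (ξ : ℕ → Θ → (Fin d → ℝ)) (n : ℕ) (θ : Θ) :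
    Matrix (Fin n) (Fin d) ℝ :=
  Matrix.of fun i : Fin n => ξ (i : ℕ) θ

/-- `F ⊩ G` : equality up to orthogonal transformation, i.e. `F = G ∘ U` for some orthogonal
`U`, where `G ∘ U` is the distribution of `Uᵀ Y` for `Y ~ G`. -/
def EqUpToOrth {d : ℕ} (F G : Measure (Fin d → ℝ)) : Prop :=
  ∃ U : Matrix (Fin d) (Fin d) ℝ, Orth U ∧ F = G.map fun y => Uᵀ.mulVec y

private def chi {n : ℕ} (S : Finset (Fin n)) (i : Fin n) : ℝ := if i ∈ S then 0 else 1

private lemma chi_nonneg {n : ℕ} (S : Finset (Fin n)) (i : Fin n) : 0 ≤ chi S i := by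
  unfold chi; split <;> norm_num

private lemma sum_chi {n : ℕ} (S : Finset (Fin n)) :
    ∑ i, chi S i = (n : ℝ) - S.card := by
  unfold chi
  rw [Finset.sum_ite, Finset.sum_const, Finset.sum_const]
  simp [Finset.filter_not, Finset.card_sdiff_of_subset (Finset.subset_univ S)]
  have h : S.card ≤ n := by simpa using S.card_le_univ
  rw [Nat.cast_sub h]

private lemma sum_sum_erase {n : ℕ} (c : ℝ) (g : Fin n → ℝ) :
    ∑ i, ∑ j ∈ Finset.univ.erase i, (c + g i + g j)
      = (n:ℝ)*((n:ℝ)-1)*c + (2*(n:ℝ)-2) * ∑ i, g i := by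
  have h : ∀ i : Fin n, ∑ j ∈ Finset.univ.erase i, (c + g i + g j)
      = (∑ j : Fin n, (c + g i + g j)) - (c + g i + g i) :=
    fun i => Finset.sum_erase_eq_sub (Finset.mem_univ i)
  simp only [h, Finset.sum_add_distrib, Finset.sum_const, Finset.card_univ,
    Fintype.card_fin, nsmul_eq_mul, Finset.sum_sub_distrib, ← Finset.mul_sum]
  ring

private lemma sum_sum_full {n m : ℕ} (c : ℝ) (g : Fin n → ℝ) (h : Fin m → ℝ) :
    ∑ i, ∑ k, (c + g i + h k)
      = (n:ℝ)*(m:ℝ)*c + (m:ℝ) * ∑ i, g i + (n:ℝ) * ∑ k, h k := by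
  simp only [Finset.sum_add_distrib, Finset.sum_const, Finset.card_univ, Fintype.card_fin,
    nsmul_eq_mul, ← Finset.mul_sum]
  ring

set_option maxHeartbeats 1600000 in
/-- Perturbation bound for the `U`-statistic when only the rows in the
index sets `S_X`, `S_Y` are controlled: the remaining rows contribute through the bound
`B` on the kernel. -/
theorem stmt_9 {d n m : ℕ} (hn : 2 ≤ n) (hm : 2 ≤ m)
    (κ : (Fin d → ℝ) → (Fin d → ℝ) → ℝ) (B C : ℝ)
    (hB : ∀ x y, |κ x y| ≤ B)
    (hC : ∀ x x' y y', |κ x y - κ x' y'| ≤ C * max (l2norm (x - x')) (l2norm (y - y')))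
    (Xt X' : Matrix (Fin n) (Fin d) ℝ) (Yt Y' : Matrix (Fin m) (Fin d) ℝ)
    (SX : Finset (Fin n)) (SY : Finset (Fin m)) :
    |Ustat κ Xt Yt - Ustat κ X' Y'| ≤
      4 * C * ((⨆ i ∈ SX, l2norm (Xt i - X' i)) + ⨆ k ∈ SY, l2norm (Yt k - Y' k))
        + 8 * B * (((n : ℝ) - SX.card) / n + ((m : ℝ) - SY.card) / m) := by
  have hnR : (2:ℝ) ≤ (n:ℝ) := by exact_mod_cast hn
  have hmR : (2:ℝ) ≤ (m:ℝ) := by exact_mod_cast hm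
  have hn0 : (0:ℝ) < (n:ℝ) := by linarith
  have hm0 : (0:ℝ) < (m:ℝ) := by linarith
  have hn1 : (0:ℝ) < (n:ℝ) - 1 := by linarith
  have hm1 : (0:ℝ) < (m:ℝ) - 1 := by linarith
  have hB0 : 0 ≤ B := le_trans (abs_nonneg _) (hB 0 0)
  have hsX : (SX.card : ℝ) ≤ (n:ℝ) := by
    have : SX.card ≤ n := by simpa using SX.card_le_univ
    exact_mod_cast this
  have hsY : (SY.card : ℝ) ≤ (m:ℝ) := by
    have : SY.card ≤ m := by simpa using SY.card_le_univ
    exact_mod_cast this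
  set εX := ⨆ i ∈ SX, l2norm (Xt i - X' i) with hεXdef
  set εY := ⨆ k ∈ SY, l2norm (Yt k - Y' k) with hεYdef
  have hgX : ∀ i : Fin n, (0:ℝ) ≤ ⨆ _ : i ∈ SX, l2norm (Xt i - X' i) := by
    intro i
    by_cases h : i ∈ SX
    · exact le_trans (Real.sqrt_nonneg _)
        (le_ciSup (f := fun _ : i ∈ SX => l2norm (Xt i - X' i))
          (Set.Finite.bddAbove (Set.finite_range _)) h)
    · haveI : IsEmpty (i ∈ SX) := ⟨h⟩
      rw [Real.iSup_of_isEmpty]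
  have hgY : ∀ k : Fin m, (0:ℝ) ≤ ⨆ _ : k ∈ SY, l2norm (Yt k - Y' k) := by
    intro k
    by_cases h : k ∈ SY
    · exact le_trans (Real.sqrt_nonneg _)
        (le_ciSup (f := fun _ : k ∈ SY => l2norm (Yt k - Y' k))
          (Set.Finite.bddAbove (Set.finite_range _)) h)
    · haveI : IsEmpty (k ∈ SY) := ⟨h⟩
      rw [Real.iSup_of_isEmpty]
  have hbX : BddAbove (Set.range fun i => ⨆ _ : i ∈ SX, l2norm (Xt i - X' i)) :=
    Set.Finite.bddAbove (Set.finite_range _)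
  have hbY : BddAbove (Set.range fun k => ⨆ _ : k ∈ SY, l2norm (Yt k - Y' k)) :=
    Set.Finite.bddAbove (Set.finite_range _)
  haveI : Nonempty (Fin n) := ⟨⟨0, by omega⟩⟩
  haveI : Nonempty (Fin m) := ⟨⟨0, by omega⟩⟩
  have hεXnn : 0 ≤ εX := le_trans (hgX ⟨0, by omega⟩) (le_ciSup hbX _)
  have hεYnn : 0 ≤ εY := le_trans (hgY ⟨0, by omega⟩) (le_ciSup hbY _)
  have hmemX : ∀ i ∈ SX, l2norm (Xt i - X' i) ≤ εX := by
    intro i hi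
    rw [hεXdef]
    calc l2norm (Xt i - X' i) ≤ ⨆ _ : i ∈ SX, l2norm (Xt i - X' i) :=
        le_ciSup (f := fun _ : i ∈ SX => l2norm (Xt i - X' i))
          (Set.Finite.bddAbove (Set.finite_range _)) hi
      _ ≤ _ := le_ciSup hbX i
  have hmemY : ∀ k ∈ SY, l2norm (Yt k - Y' k) ≤ εY := by
    intro k hk
    rw [hεYdef]
    calc l2norm (Yt k - Y' k) ≤ ⨆ _ : k ∈ SY, l2norm (Yt k - Y' k) :=
        le_ciSup (f := fun _ : k ∈ SY => l2norm (Yt k - Y' k))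
          (Set.Finite.bddAbove (Set.finite_range _)) hk
      _ ≤ _ := le_ciSup hbY k
  have h2B : ∀ a b a' b', |κ a b - κ a' b'| ≤ 2 * B := by
    intro a b a' b'
    calc |κ a b - κ a' b'| ≤ |κ a b| + |κ a' b'| := abs_sub _ _
      _ ≤ 2 * B := by linarith [hB a b, hB a' b']
  rcases Nat.eq_zero_or_pos d with hd | hd
  · -- degenerate case d = 0
    subst hd
    have hX : Xt = X' := by ext i j; exact j.elim0
    have hY : Yt = Y' := by ext i j; exact j.elim0
    have hεX0 : εX = 0 := by
      rw [hεXdef]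
      have h0 : ∀ i : Fin n, (⨆ _ : i ∈ SX, l2norm (Xt i - X' i)) = 0 := by
        intro i
        have hz : l2norm (Xt i - X' i) = 0 := by simp [l2norm]
        by_cases h : i ∈ SX
        · haveI : Nonempty (i ∈ SX) := ⟨h⟩
          exact le_antisymm (ciSup_le fun _ => hz.le) (hgX i)
        · haveI : IsEmpty (i ∈ SX) := ⟨h⟩
          rw [Real.iSup_of_isEmpty]
      simp only [h0]
      exact ciSup_const
    have hεY0 : εY = 0 := by
      rw [hεYdef]
      have h0 : ∀ k : Fin m, (⨆ _ : k ∈ SY, l2norm (Yt k - Y' k)) = 0 := by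
        intro k
        have hz : l2norm (Yt k - Y' k) = 0 := by simp [l2norm]
        by_cases h : k ∈ SY
        · haveI : Nonempty (k ∈ SY) := ⟨h⟩
          exact le_antisymm (ciSup_le fun _ => hz.le) (hgY k)
        · haveI : IsEmpty (k ∈ SY) := ⟨h⟩
          rw [Real.iSup_of_isEmpty]
      simp only [h0]
      exact ciSup_const
    rw [hX, hY, hεX0, hεY0, sub_self, abs_zero]
    have h1 : 0 ≤ ((n:ℝ) - SX.card)/n := div_nonneg (by linarith) hn0.le
    have h2 : 0 ≤ ((m:ℝ) - SY.card)/m := div_nonneg (by linarith) hm0.le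
    nlinarith
  · -- main case d ≥ 1
    have hC0 : 0 ≤ C := by
      by_contra hneg
      push_neg at hneg
      have h1 := hC (fun _ => 1) (fun _ => 0) (fun _ => 0) (fun _ => 0)
      have h2 : l2norm ((fun _ : Fin d => (1:ℝ)) - fun _ : Fin d => (0:ℝ)) = Real.sqrt d := by
        simp [l2norm]
      have h3 : l2norm ((fun _ : Fin d => (0:ℝ)) - fun _ : Fin d => (0:ℝ)) = 0 := by
        simp [l2norm]
      rw [h2, h3] at h1
      have hs : 0 < Real.sqrt d := Real.sqrt_pos.mpr (by exact_mod_cast hd)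
      rw [max_eq_left hs.le] at h1
      nlinarith [abs_nonneg (κ (fun _ => (1:ℝ)) (fun _ => (0:ℝ)) - κ (fun _ => (0:ℝ)) (fun _ => (0:ℝ)))]
    -- pointwise bounds
    have hpt1 : ∀ i j : Fin n, |κ (Xt i) (Xt j) - κ (X' i) (X' j)|
        ≤ C * εX + 2*B*chi SX i + 2*B*chi SX j := by
      intro i j
      by_cases hi : i ∈ SX
      · by_cases hj : j ∈ SX
        · have h := hC (Xt i) (X' i) (Xt j) (X' j)
          have hmax : max (l2norm (Xt i - X' i)) (l2norm (Xt j - X' j)) ≤ εX :=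
            max_le (hmemX i hi) (hmemX j hj)
          have h' : |κ (Xt i) (Xt j) - κ (X' i) (X' j)| ≤ C * εX :=
            h.trans (mul_le_mul_of_nonneg_left hmax hC0)
          simp only [chi, if_pos hi, if_pos hj]
          linarith
        · have h := h2B (Xt i) (Xt j) (X' i) (X' j)
          simp only [chi, if_pos hi, if_neg hj]
          nlinarith [mul_nonneg hC0 hεXnn]
      · have h := h2B (Xt i) (Xt j) (X' i) (X' j)
        simp only [chi, if_neg hi]
        have hj' : (0:ℝ) ≤ 2 * B * if j ∈ SX then (0:ℝ) else 1 :=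
          mul_nonneg (mul_nonneg (by norm_num) hB0) (by split <;> norm_num)
        nlinarith [mul_nonneg hC0 hεXnn]
    have hpt3 : ∀ k l : Fin m, |κ (Yt k) (Yt l) - κ (Y' k) (Y' l)|
        ≤ C * εY + 2*B*chi SY k + 2*B*chi SY l := by
      intro k l
      by_cases hk : k ∈ SY
      · by_cases hl : l ∈ SY
        · have h := hC (Yt k) (Y' k) (Yt l) (Y' l)
          have hmax : max (l2norm (Yt k - Y' k)) (l2norm (Yt l - Y' l)) ≤ εY :=
            max_le (hmemY k hk) (hmemY l hl)
          have h' : |κ (Yt k) (Yt l) - κ (Y' k) (Y' l)| ≤ C * εY :=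
            h.trans (mul_le_mul_of_nonneg_left hmax hC0)
          simp only [chi, if_pos hk, if_pos hl]
          linarith
        · have h := h2B (Yt k) (Yt l) (Y' k) (Y' l)
          simp only [chi, if_pos hk, if_neg hl]
          nlinarith [mul_nonneg hC0 hεYnn]
      · have h := h2B (Yt k) (Yt l) (Y' k) (Y' l)
        simp only [chi, if_neg hk]
        have hl' : (0:ℝ) ≤ 2 * B * if l ∈ SY then (0:ℝ) else 1 :=
          mul_nonneg (mul_nonneg (by norm_num) hB0) (by split <;> norm_num)
        nlinarith [mul_nonneg hC0 hεYnn]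
    have hpt2 : ∀ (i : Fin n) (k : Fin m), |κ (Xt i) (Yt k) - κ (X' i) (Y' k)|
        ≤ C * (εX + εY) + 2*B*chi SX i + 2*B*chi SY k := by
      intro i k
      by_cases hi : i ∈ SX
      · by_cases hk : k ∈ SY
        · have h := hC (Xt i) (X' i) (Yt k) (Y' k)
          have hmax : max (l2norm (Xt i - X' i)) (l2norm (Yt k - Y' k)) ≤ εX + εY :=
            max_le (le_trans (hmemX i hi) (by linarith)) (le_trans (hmemY k hk) (by linarith))
          have h' : |κ (Xt i) (Yt k) - κ (X' i) (Y' k)| ≤ C * (εX + εY) :=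
            h.trans (mul_le_mul_of_nonneg_left hmax hC0)
          simp only [chi, if_pos hi, if_pos hk]
          linarith
        · have h := h2B (Xt i) (Yt k) (X' i) (Y' k)
          simp only [chi, if_pos hi, if_neg hk]
          nlinarith [mul_nonneg hC0 (add_nonneg hεXnn hεYnn)]
      · have h := h2B (Xt i) (Yt k) (X' i) (Y' k)
        simp only [chi, if_neg hi]
        have hk' : (0:ℝ) ≤ 2 * B * if k ∈ SY then (0:ℝ) else 1 :=
          mul_nonneg (mul_nonneg (by norm_num) hB0) (by split <;> norm_num)
        nlinarith [mul_nonneg hC0 (add_nonneg hεXnn hεYnn)]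
    -- define the difference sums
    set T1 := ∑ i, ∑ j ∈ Finset.univ.erase i, (κ (Xt i) (Xt j) - κ (X' i) (X' j)) with hT1def
    set T2 := ∑ i, ∑ k, (κ (Xt i) (Yt k) - κ (X' i) (Y' k)) with hT2def
    set T3 := ∑ k, ∑ l ∈ Finset.univ.erase k, (κ (Yt k) (Yt l) - κ (Y' k) (Y' l)) with hT3def
    have hdecomp : Ustat κ Xt Yt - Ustat κ X' Y'
        = ((n : ℝ) * ((n : ℝ) - 1))⁻¹ * T1 - 2 * ((m : ℝ) * (n : ℝ))⁻¹ * T2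
          + ((m : ℝ) * ((m : ℝ) - 1))⁻¹ * T3 := by
      rw [hT1def, hT2def, hT3def]
      simp only [Ustat, Finset.sum_sub_distrib]
      ring
    have hT1b : |T1| ≤ (n:ℝ)*((n:ℝ)-1)*(C*εX) + (2*(n:ℝ)-2)*(2*B*((n:ℝ) - SX.card)) := by
      have hsum : ∑ i, ∑ j ∈ Finset.univ.erase i, (C*εX + (fun i => 2*B*chi SX i) i + (fun i => 2*B*chi SX i) j)
          = (n:ℝ)*((n:ℝ)-1)*(C*εX) + (2*(n:ℝ)-2) * ∑ i, 2*B*chi SX i :=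
        sum_sum_erase (C*εX) (fun i => 2*B*chi SX i)
      have hs2 : ∑ i, 2*B*chi SX i = 2*B*((n:ℝ) - SX.card) := by
        rw [← Finset.mul_sum, sum_chi]
      calc |T1| ≤ ∑ i, |∑ j ∈ Finset.univ.erase i, (κ (Xt i) (Xt j) - κ (X' i) (X' j))| :=
            Finset.abs_sum_le_sum_abs _ _
        _ ≤ ∑ i, ∑ j ∈ Finset.univ.erase i, |κ (Xt i) (Xt j) - κ (X' i) (X' j)| :=
            Finset.sum_le_sum (fun i _ => Finset.abs_sum_le_sum_abs _ _)
        _ ≤ ∑ i, ∑ j ∈ Finset.univ.erase i, (C*εX + (fun i => 2*B*chi SX i) i + (fun i => 2*B*chi SX i) j) :=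
            Finset.sum_le_sum (fun i _ => Finset.sum_le_sum (fun j _ => hpt1 i j))
        _ = _ := by rw [hsum, hs2]
    have hT3b : |T3| ≤ (m:ℝ)*((m:ℝ)-1)*(C*εY) + (2*(m:ℝ)-2)*(2*B*((m:ℝ) - SY.card)) := by
      have hsum : ∑ k, ∑ l ∈ Finset.univ.erase k, (C*εY + (fun k => 2*B*chi SY k) k + (fun k => 2*B*chi SY k) l)
          = (m:ℝ)*((m:ℝ)-1)*(C*εY) + (2*(m:ℝ)-2) * ∑ k, 2*B*chi SY k :=
        sum_sum_erase (C*εY) (fun k => 2*B*chi SY k)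
      have hs2 : ∑ k, 2*B*chi SY k = 2*B*((m:ℝ) - SY.card) := by
        rw [← Finset.mul_sum, sum_chi]
      calc |T3| ≤ ∑ k, |∑ l ∈ Finset.univ.erase k, (κ (Yt k) (Yt l) - κ (Y' k) (Y' l))| :=
            Finset.abs_sum_le_sum_abs _ _
        _ ≤ ∑ k, ∑ l ∈ Finset.univ.erase k, |κ (Yt k) (Yt l) - κ (Y' k) (Y' l)| :=
            Finset.sum_le_sum (fun k _ => Finset.abs_sum_le_sum_abs _ _)
        _ ≤ ∑ k, ∑ l ∈ Finset.univ.erase k, (C*εY + (fun k => 2*B*chi SY k) k + (fun k => 2*B*chi SY k) l) :=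
            Finset.sum_le_sum (fun k _ => Finset.sum_le_sum (fun l _ => hpt3 k l))
        _ = _ := by rw [hsum, hs2]
    have hT2b : |T2| ≤ (n:ℝ)*(m:ℝ)*(C*(εX+εY)) + (m:ℝ)*(2*B*((n:ℝ) - SX.card))
        + (n:ℝ)*(2*B*((m:ℝ) - SY.card)) := by
      have hsum : ∑ i, ∑ k, (C*(εX+εY) + (fun i => 2*B*chi SX i) i + (fun k => 2*B*chi SY k) k)
          = (n:ℝ)*(m:ℝ)*(C*(εX+εY)) + (m:ℝ) * ∑ i, 2*B*chi SX i + (n:ℝ) * ∑ k, 2*B*chi SY k :=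
        sum_sum_full (C*(εX+εY)) (fun i => 2*B*chi SX i) (fun k => 2*B*chi SY k)
      have hs2 : ∑ i, 2*B*chi SX i = 2*B*((n:ℝ) - SX.card) := by
        rw [← Finset.mul_sum, sum_chi]
      have hs3 : ∑ k, 2*B*chi SY k = 2*B*((m:ℝ) - SY.card) := by
        rw [← Finset.mul_sum, sum_chi]
      calc |T2| ≤ ∑ i, |∑ k, (κ (Xt i) (Yt k) - κ (X' i) (Y' k))| :=
            Finset.abs_sum_le_sum_abs _ _
        _ ≤ ∑ i, ∑ k, |κ (Xt i) (Yt k) - κ (X' i) (Y' k)| :=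
            Finset.sum_le_sum (fun i _ => Finset.abs_sum_le_sum_abs _ _)
        _ ≤ ∑ i, ∑ k, (C*(εX+εY) + (fun i => 2*B*chi SX i) i + (fun k => 2*B*chi SY k) k) :=
            Finset.sum_le_sum (fun i _ => Finset.sum_le_sum (fun k _ => hpt2 i k))
        _ = _ := by rw [hsum, hs2, hs3]
    have hinv1 : (0:ℝ) ≤ ((n:ℝ)*((n:ℝ)-1))⁻¹ := inv_nonneg.mpr (mul_nonneg hn0.le hn1.le)
    have hinv2 : (0:ℝ) ≤ ((m:ℝ)*(n:ℝ))⁻¹ := inv_nonneg.mpr (mul_nonneg hm0.le hn0.le)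
    have hinv3 : (0:ℝ) ≤ ((m:ℝ)*((m:ℝ)-1))⁻¹ := inv_nonneg.mpr (mul_nonneg hm0.le hm1.le)
    have htri : |Ustat κ Xt Yt - Ustat κ X' Y'|
        ≤ ((n:ℝ)*((n:ℝ)-1))⁻¹ * |T1| + 2*((m:ℝ)*(n:ℝ))⁻¹ * |T2| + ((m:ℝ)*((m:ℝ)-1))⁻¹ * |T3| := by
      rw [hdecomp]
      calc |((n:ℝ)*((n:ℝ)-1))⁻¹ * T1 - 2*((m:ℝ)*(n:ℝ))⁻¹ * T2 + ((m:ℝ)*((m:ℝ)-1))⁻¹ * T3|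
          ≤ |((n:ℝ)*((n:ℝ)-1))⁻¹ * T1 - 2*((m:ℝ)*(n:ℝ))⁻¹ * T2| + |((m:ℝ)*((m:ℝ)-1))⁻¹ * T3| :=
            abs_add_le _ _
        _ ≤ |((n:ℝ)*((n:ℝ)-1))⁻¹ * T1| + |2*((m:ℝ)*(n:ℝ))⁻¹ * T2| + |((m:ℝ)*((m:ℝ)-1))⁻¹ * T3| := by
            linarith [abs_sub (((n:ℝ)*((n:ℝ)-1))⁻¹ * T1) (2*((m:ℝ)*(n:ℝ))⁻¹ * T2)]
        _ = ((n:ℝ)*((n:ℝ)-1))⁻¹ * |T1| + 2*((m:ℝ)*(n:ℝ))⁻¹ * |T2| + ((m:ℝ)*((m:ℝ)-1))⁻¹ * |T3| := by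
            rw [abs_mul, abs_mul, abs_mul, abs_mul, abs_of_nonneg hinv1, abs_of_nonneg hinv2,
              abs_of_nonneg hinv3, abs_of_nonneg (by norm_num : (0:ℝ) ≤ 2)]
    have hn0' : (n:ℝ) ≠ 0 := hn0.ne'
    have hm0' : (m:ℝ) ≠ 0 := hm0.ne'
    have hn1' : (n:ℝ) - 1 ≠ 0 := hn1.ne'
    have hm1' : (m:ℝ) - 1 ≠ 0 := hm1.ne'
    have hA1 : ((n:ℝ)*((n:ℝ)-1))⁻¹ * |T1| ≤ C*εX + 4*B*(((n:ℝ) - SX.card)/n) := by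
      have h := mul_le_mul_of_nonneg_left hT1b hinv1
      have heq : ((n:ℝ)*((n:ℝ)-1))⁻¹ * ((n:ℝ)*((n:ℝ)-1)*(C*εX) + (2*(n:ℝ)-2)*(2*B*((n:ℝ) - SX.card)))
          = C*εX + 4*B*(((n:ℝ) - SX.card)/n) := by
        field_simp
        ring
      rw [heq] at h
      linarith [h]
    have hA3 : ((m:ℝ)*((m:ℝ)-1))⁻¹ * |T3| ≤ C*εY + 4*B*(((m:ℝ) - SY.card)/m) := by
      have h := mul_le_mul_of_nonneg_left hT3b hinv3
      have heq : ((m:ℝ)*((m:ℝ)-1))⁻¹ * ((m:ℝ)*((m:ℝ)-1)*(C*εY) + (2*(m:ℝ)-2)*(2*B*((m:ℝ) - SY.card)))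
          = C*εY + 4*B*(((m:ℝ) - SY.card)/m) := by
        field_simp
        ring
      rw [heq] at h
      linarith [h]
    have hA2 : 2*((m:ℝ)*(n:ℝ))⁻¹ * |T2|
        ≤ 2*C*εX + 2*C*εY + 4*B*(((n:ℝ) - SX.card)/n) + 4*B*(((m:ℝ) - SY.card)/m) := by
      have h := mul_le_mul_of_nonneg_left hT2b (by linarith : (0:ℝ) ≤ 2*((m:ℝ)*(n:ℝ))⁻¹)
      have heq : 2*((m:ℝ)*(n:ℝ))⁻¹ * ((n:ℝ)*(m:ℝ)*(C*(εX+εY)) + (m:ℝ)*(2*B*((n:ℝ) - SX.card))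
            + (n:ℝ)*(2*B*((m:ℝ) - SY.card)))
          = 2*C*εX + 2*C*εY + 4*B*(((n:ℝ) - SX.card)/n) + 4*B*(((m:ℝ) - SY.card)/m) := by
        field_simp
        ring
      rw [heq] at h
      linarith [h]
    have hCX : 0 ≤ C * εX := mul_nonneg hC0 hεXnn
    have hCY : 0 ≤ C * εY := mul_nonneg hC0 hεYnn
    linarith [htri, hA1, hA2, hA3]

end
end

section
/- Let Ω ⊂ ℝ^d be compact and let κ be a twice continuously differentiable radial kernel. Then there exists a constant L (depending only on κ and Ω) such that for all n, m ≥ 2, all n×d matrices X, X̂ and all m×d matrices Y, Ŷ with rows in Ω, and all d×d orthogonal matrices W₁, W₂, the remainder terms r₁ = ((m+n)/(n(n−1))) Σ_{i=1}^n (κ(X_i,X_i) − κ(X̂_i,X̂_i)) + ((m+n)/(m(m−1))) Σ_{k=1}^m (κ(Y_k,Y_k) − κ(Ŷ_k,Ŷ_k)) and r₂ = ((m+n)/(n²(n−1))) Σ_{i,j} (κ(X_i,X_j) − κ(X̂_i,X̂_j)) + ((m+n)/(m²(m−1))) Σ_{k,l} (κ(Y_k,Y_l) − κ(Ŷ_k,Ŷ_l))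 both satisfy the bound |r| ≤ L (m+n) ( ‖X̂ − XW₁‖_{2→∞}/(n−1) + ‖Ŷ − YW₂‖_{2→∞}/(m−1) ). -/
open MeasureTheory ProbabilityTheory Matrix Filter Topology

noncomputable section

private lemma l2_eq {k : ℕ} (x : Fin k → ℝ) :
    l2norm x = ‖(WithLp.equiv 2 (Fin k → ℝ)).symm x‖ := by
  rw [EuclideanSpace.norm_eq]
  simp [l2norm, sq_abs]

private lemma l2_nonneg {k : ℕ} (x : Fin k → ℝ) : 0 ≤ l2norm x := Real.sqrt_nonneg _

private lemma l2_sub_le {k : ℕ} (a b : Fin k → ℝ) :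
    l2norm (a - b) ≤ l2norm a + l2norm b := by
  simp only [l2_eq]
  exact norm_sub_le _ _

private lemma sup_le_l2 {k : ℕ} (x : Fin k → ℝ) : ‖x‖ ≤ l2norm x := by
  refine (pi_norm_le_iff_of_nonneg (l2_nonneg x)).2 fun i => ?_
  rw [Real.norm_eq_abs, ← Real.sqrt_sq_eq_abs]
  exact Real.sqrt_le_sqrt
    (Finset.single_le_sum (fun j _ => sq_nonneg (x j)) (Finset.mem_univ i))

private lemma l2_vecMul {k : ℕ} {W : Matrix (Fin k) (Fin k) ℝ} (hW : Orth W)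
    (v : Fin k → ℝ) : l2norm (Matrix.vecMul v W) = l2norm v := by
  have h1 : W * Wᵀ = 1 := mul_eq_one_comm.mp hW
  have key : Matrix.vecMul v W ⬝ᵥ Matrix.vecMul v W = v ⬝ᵥ v := by
    calc Matrix.vecMul v W ⬝ᵥ Matrix.vecMul v W
        = Matrix.vecMul v W ⬝ᵥ Wᵀ.mulVec v := by rw [Matrix.mulVec_transpose]
      _ = Matrix.vecMul (Matrix.vecMul v W) Wᵀ ⬝ᵥ v := by rw [Matrix.dotProduct_mulVec]
      _ = v ⬝ᵥ v := by rw [Matrix.vecMul_vecMul, h1, Matrix.vecMul_one]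
  unfold l2norm
  congr 1
  have hsq : ∀ (w : Fin k → ℝ), ∑ i, w i ^ 2 = w ⬝ᵥ w := by
    intro w; simp [dotProduct, sq]
  rw [hsq, hsq, key]

private lemma mul_row {n k : ℕ} (X : Matrix (Fin n) (Fin k) ℝ)
    (W : Matrix (Fin k) (Fin k) ℝ) (i : Fin n) :
    (X * W) i = Matrix.vecMul (X i) W := by
  funext j
  simp [Matrix.mul_apply, Matrix.vecMul, dotProduct]

private lemma row_le_norm2inf {n k : ℕ} (M : Matrix (Fin n) (Fin k) ℝ) (i : Fin n) :
    l2norm (M i) ≤ norm2inf M := by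
  unfold norm2inf
  exact le_ciSup (f := fun i => l2norm (M i)) (Set.Finite.bddAbove (Set.finite_range _)) i

private lemma norm2inf_nonneg {n k : ℕ} (M : Matrix (Fin n) (Fin k) ℝ) :
    0 ≤ norm2inf M :=
  Real.iSup_nonneg fun _ => l2_nonneg _

/-- bound on the remainder terms `r₁`, `r₂` in the proof of Theorem 1 of
Tang et al..  For a twice continuously differentiable radial kernel there is a constant `L`
(depending only on `κ` and `Ω`) bounding both remainders by
`L(m+n)(‖X̂ − XW₁‖_{2→∞}/(n−1) + ‖Ŷ − YW₂‖_{2→∞}/(m−1))`. -/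
theorem stmt_17 {d : ℕ} (Ω : Set (Fin d → ℝ)) (hΩ : IsCompact Ω)
    (κ : (Fin d → ℝ) → (Fin d → ℝ) → ℝ)
    (hκ : ContDiff ℝ 2 fun p : (Fin d → ℝ) × (Fin d → ℝ) => κ p.1 p.2)
    (hrad : IsRadial κ) :
    ∃ L : ℝ, ∀ (n m : ℕ), 2 ≤ n → 2 ≤ m →
      ∀ (X Xh : Matrix (Fin n) (Fin d) ℝ) (Y Yh : Matrix (Fin m) (Fin d) ℝ),
        (∀ i, X i ∈ Ω) → (∀ i, Xh i ∈ Ω) → (∀ k, Y k ∈ Ω) → (∀ k, Yh k ∈ Ω) →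
        ∀ W1 W2 : Matrix (Fin d) (Fin d) ℝ, Orth W1 → Orth W2 →
          |((m : ℝ) + n) / ((n : ℝ) * ((n : ℝ) - 1)) *
              ∑ i, (κ (X i) (X i) - κ (Xh i) (Xh i))
            + ((m : ℝ) + n) / ((m : ℝ) * ((m : ℝ) - 1)) *
              ∑ k, (κ (Y k) (Y k) - κ (Yh k) (Yh k))| ≤
            L * ((m : ℝ) + n) * (norm2inf (Xh - X * W1) / ((n : ℝ) - 1)
              + norm2inf (Yh - Y * W2) / ((m : ℝ) - 1)) ∧
          |((m : ℝ) + n) / ((n : ℝ) ^ 2 * ((n : ℝ) - 1)) *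
              ∑ i, ∑ j, (κ (X i) (X j) - κ (Xh i) (Xh j))
            + ((m : ℝ) + n) / ((m : ℝ) ^ 2 * ((m : ℝ) - 1)) *
              ∑ k, ∑ l, (κ (Y k) (Y l) - κ (Yh k) (Yh l))| ≤
            L * ((m : ℝ) + n) * (norm2inf (Xh - X * W1) / ((n : ℝ) - 1)
              + norm2inf (Yh - Y * W2) / ((m : ℝ) - 1)) := by
  classical
  obtain ⟨φ, hφ⟩ := hrad
  have hcont : Continuous fun x : Fin d → ℝ => l2norm x := by
    unfold l2norm
    exact Real.continuous_sqrt.comp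
      (continuous_finset_sum _ fun i _ => (continuous_apply i).pow 2)
  obtain ⟨R, hR⟩ : ∃ R : ℝ, ∀ x ∈ Ω, l2norm x ≤ R := by
    obtain ⟨R, hR⟩ := (hΩ.image hcont).bddAbove
    exact ⟨R, fun x hx => hR (Set.mem_image_of_mem _ hx)⟩
  set s : Set (Fin d → ℝ) := Metric.closedBall 0 (2 * R + 1) with hs
  have hscomp : IsCompact s := isCompact_closedBall _ _
  have hsconv : Convex ℝ s := convex_closedBall _ _
  set g : (Fin d → ℝ) → ℝ := fun v => κ v 0 with hg
  have hg2 : ContDiff ℝ 2 g := hκ.comp (contDiff_id.prodMk contDiff_const)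
  have hg1 : ContDiff ℝ 1 g := hg2.of_le (by norm_num)
  obtain ⟨C0, hC0⟩ : ∃ C : ℝ, ∀ x ∈ s, ‖fderiv ℝ g x‖ ≤ C := by
    have hcf : Continuous fun x => ‖fderiv ℝ g x‖ :=
      (hg2.continuous_fderiv (by norm_num)).norm
    obtain ⟨C, hC⟩ := (hscomp.image hcf).bddAbove
    exact ⟨C, fun x hx => hC (Set.mem_image_of_mem _ hx)⟩
  set C : ℝ := max C0 0 with hCdef
  have hCnn : 0 ≤ C := le_max_right _ _
  have hC : ∀ x ∈ s, ‖fderiv ℝ g x‖ ≤ C := fun x hx =>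
    le_trans (hC0 x hx) (le_max_left _ _)
  have hdiff : ∀ x ∈ s, DifferentiableAt ℝ g x := fun x _ =>
    hg1.differentiable one_ne_zero x
  have hginv : ∀ (W : Matrix (Fin d) (Fin d) ℝ), Orth W → ∀ v,
      g (Matrix.vecMul v W) = g v := by
    intro W hW v
    simp only [hg, hφ, sub_zero, l2_vecMul hW]
  have hdiagκ : ∀ x : Fin d → ℝ, κ x x = φ (l2norm 0) := fun x => by
    rw [hφ, sub_self]
  -- Main pointwise bound
  have main : ∀ (n : ℕ) (X Xh : Matrix (Fin n) (Fin d) ℝ),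
      (∀ i, X i ∈ Ω) → (∀ i, Xh i ∈ Ω) →
      ∀ W : Matrix (Fin d) (Fin d) ℝ, Orth W →
      ∀ i j, |κ (X i) (X j) - κ (Xh i) (Xh j)| ≤ 2 * C * norm2inf (Xh - X * W) := by
    intro n X Xh hX hXh W hW i j
    set a : Fin d → ℝ := Matrix.vecMul (X i) W - Matrix.vecMul (X j) W with ha
    set b : Fin d → ℝ := Xh i - Xh j with hb
    have hla : l2norm a = l2norm (X i - X j) := by
      rw [ha, ← Matrix.sub_vecMul, l2_vecMul hW]
    have hκa : κ (X i) (X j) = g a := by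
      simp only [hg, hφ, sub_zero]
      rw [hla]
    have hκb : κ (Xh i) (Xh j) = g b := by
      simp only [hg, hφ, sub_zero, hb]
    have haS : a ∈ s := by
      rw [hs, Metric.mem_closedBall, dist_zero_right]
      calc ‖a‖ ≤ l2norm a := sup_le_l2 a
        _ = l2norm (X i - X j) := hla
        _ ≤ l2norm (X i) + l2norm (X j) := l2_sub_le _ _
        _ ≤ R + R := add_le_add (hR _ (hX i)) (hR _ (hX j))
        _ ≤ 2 * R + 1 := by linarith
    have hbS : b ∈ s := by
      rw [hs, Metric.mem_closedBall, dist_zero_right]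
      calc ‖b‖ ≤ l2norm b := sup_le_l2 b
        _ ≤ l2norm (Xh i) + l2norm (Xh j) := l2_sub_le _ _
        _ ≤ R + R := add_le_add (hR _ (hXh i)) (hR _ (hXh j))
        _ ≤ 2 * R + 1 := by linarith
    have hab : a - b = (Xh - X * W) j - (Xh - X * W) i := by
      funext t
      simp only [ha, hb, Matrix.sub_apply, Pi.sub_apply, mul_row]
      ring
    have habd : ‖a - b‖ ≤ 2 * norm2inf (Xh - X * W) := by
      calc ‖a - b‖ ≤ l2norm (a - b) := sup_le_l2 _
        _ = l2norm ((Xh - X * W) j - (Xh - X * W) i) := by rw [hab]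
        _ ≤ l2norm ((Xh - X * W) j) + l2norm ((Xh - X * W) i) := l2_sub_le _ _
        _ ≤ norm2inf (Xh - X * W) + norm2inf (Xh - X * W) :=
            add_le_add (row_le_norm2inf _ _) (row_le_norm2inf _ _)
        _ = 2 * norm2inf (Xh - X * W) := by ring
    rw [hκa, hκb, ← Real.norm_eq_abs]
    calc ‖g a - g b‖ ≤ C * ‖a - b‖ :=
          hsconv.norm_image_sub_le_of_norm_fderiv_le hdiff hC hbS haS
      _ ≤ C * (2 * norm2inf (Xh - X * W)) := mul_le_mul_of_nonneg_left habd hCnn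
      _ = 2 * C * norm2inf (Xh - X * W) := by ring
  refine ⟨2 * C, ?_⟩
  intro n m hn hm X Xh Y Yh hX hXh hY hYh W1 W2 hW1 hW2
  set N1 : ℝ := norm2inf (Xh - X * W1) with hN1
  set N2 : ℝ := norm2inf (Yh - Y * W2) with hN2
  have hN1nn : 0 ≤ N1 := norm2inf_nonneg _
  have hN2nn : 0 ≤ N2 := norm2inf_nonneg _
  have hn2 : (2 : ℝ) ≤ (n : ℝ) := by exact_mod_cast hn
  have hm2 : (2 : ℝ) ≤ (m : ℝ) := by exact_mod_cast hm
  have hn1 : (0 : ℝ) < (n : ℝ) - 1 := by linarith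
  have hm1 : (0 : ℝ) < (m : ℝ) - 1 := by linarith
  have hn0 : (0 : ℝ) < (n : ℝ) := by linarith
  have hm0 : (0 : ℝ) < (m : ℝ) := by linarith
  have hRHSnn : 0 ≤ 2 * C * ((m : ℝ) + n) *
      (N1 / ((n : ℝ) - 1) + N2 / ((m : ℝ) - 1)) := by
    apply mul_nonneg (mul_nonneg (by linarith) (by linarith))
    exact add_nonneg (div_nonneg hN1nn hn1.le) (div_nonneg hN2nn hm1.le)
  constructor
  · have s1 : ∑ i, (κ (X i) (X i) - κ (Xh i) (Xh i)) = 0 :=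
      Finset.sum_eq_zero fun i _ => by rw [hdiagκ, hdiagκ, sub_self]
    have s2 : ∑ k, (κ (Y k) (Y k) - κ (Yh k) (Yh k)) = 0 :=
      Finset.sum_eq_zero fun k _ => by rw [hdiagκ, hdiagκ, sub_self]
    rw [s1, s2, mul_zero, mul_zero, add_zero, abs_zero]
    exact hRHSnn
  · have hsum : ∀ (n' : ℕ) (X' Xh' : Matrix (Fin n') (Fin d) ℝ),
        (∀ i, X' i ∈ Ω) → (∀ i, Xh' i ∈ Ω) →
        ∀ W : Matrix (Fin d) (Fin d) ℝ, Orth W →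
        |∑ i, ∑ j, (κ (X' i) (X' j) - κ (Xh' i) (Xh' j))| ≤
          (n' : ℝ) ^ 2 * (2 * C * norm2inf (Xh' - X' * W)) := by
      intro n' X' Xh' hX' hXh' W hW
      calc |∑ i, ∑ j, (κ (X' i) (X' j) - κ (Xh' i) (Xh' j))|
          ≤ ∑ i, |∑ j, (κ (X' i) (X' j) - κ (Xh' i) (Xh' j))| :=
            Finset.abs_sum_le_sum_abs _ _
        _ ≤ ∑ i, ∑ j, |κ (X' i) (X' j) - κ (Xh' i) (Xh' j)| :=
            Finset.sum_le_sum fun i _ => Finset.abs_sum_le_sum_abs _ _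
        _ ≤ ∑ _i : Fin n', ∑ _j : Fin n', 2 * C * norm2inf (Xh' - X' * W) :=
            Finset.sum_le_sum fun i _ => Finset.sum_le_sum fun j _ =>
              main n' X' Xh' hX' hXh' W hW i j
        _ = (n' : ℝ) ^ 2 * (2 * C * norm2inf (Xh' - X' * W)) := by
            simp [Finset.sum_const, Finset.card_univ]
            ring
    have hX1 := hsum n X Xh hX hXh W1 hW1
    have hY1 := hsum m Y Yh hY hYh W2 hW2
    have hA : |((m : ℝ) + n) / ((n : ℝ) ^ 2 * ((n : ℝ) - 1)) *
        ∑ i, ∑ j, (κ (X i) (X j) - κ (Xh i) (Xh j))| ≤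
        2 * C * ((m : ℝ) + n) * (N1 / ((n : ℝ) - 1)) := by
      rw [abs_mul, abs_of_nonneg (by positivity :
        (0:ℝ) ≤ ((m : ℝ) + n) / ((n : ℝ) ^ 2 * ((n : ℝ) - 1)))]
      calc ((m : ℝ) + n) / ((n : ℝ) ^ 2 * ((n : ℝ) - 1)) *
            |∑ i, ∑ j, (κ (X i) (X j) - κ (Xh i) (Xh j))|
          ≤ ((m : ℝ) + n) / ((n : ℝ) ^ 2 * ((n : ℝ) - 1)) *
            ((n : ℝ) ^ 2 * (2 * C * N1)) := by
            apply mul_le_mul_of_nonneg_left _ (by positivity)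
            exact hX1
        _ = 2 * C * ((m : ℝ) + n) * (N1 / ((n : ℝ) - 1)) := by
            field_simp
    have hB : |((m : ℝ) + n) / ((m : ℝ) ^ 2 * ((m : ℝ) - 1)) *
        ∑ k, ∑ l, (κ (Y k) (Y l) - κ (Yh k) (Yh l))| ≤
        2 * C * ((m : ℝ) + n) * (N2 / ((m : ℝ) - 1)) := by
      rw [abs_mul, abs_of_nonneg (by positivity :
        (0:ℝ) ≤ ((m : ℝ) + n) / ((m : ℝ) ^ 2 * ((m : ℝ) - 1)))]
      calc ((m : ℝ) + n) / ((m : ℝ) ^ 2 * ((m : ℝ) - 1)) *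
            |∑ k, ∑ l, (κ (Y k) (Y l) - κ (Yh k) (Yh l))|
          ≤ ((m : ℝ) + n) / ((m : ℝ) ^ 2 * ((m : ℝ) - 1)) *
            ((m : ℝ) ^ 2 * (2 * C * N2)) := by
            apply mul_le_mul_of_nonneg_left _ (by positivity)
            exact hY1
        _ = 2 * C * ((m : ℝ) + n) * (N2 / ((m : ℝ) - 1)) := by
            field_simp
    calc |((m : ℝ) + n) / ((n : ℝ) ^ 2 * ((n : ℝ) - 1)) *
            ∑ i, ∑ j, (κ (X i) (X j) - κ (Xh i) (Xh j))
          + ((m : ℝ) + n) / ((m : ℝ) ^ 2 * ((m : ℝ) - 1)) *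
            ∑ k, ∑ l, (κ (Y k) (Y l) - κ (Yh k) (Yh l))|
        ≤ |((m : ℝ) + n) / ((n : ℝ) ^ 2 * ((n : ℝ) - 1)) *
            ∑ i, ∑ j, (κ (X i) (X j) - κ (Xh i) (Xh j))|
          + |((m : ℝ) + n) / ((m : ℝ) ^ 2 * ((m : ℝ) - 1)) *
            ∑ k, ∑ l, (κ (Y k) (Y l) - κ (Yh k) (Yh l))| := abs_add_le _ _
      _ ≤ 2 * C * ((m : ℝ) + n) * (N1 / ((n : ℝ) - 1))
          + 2 * C * ((m : ℝ) + n) * (N2 / ((m : ℝ) - 1)) := add_le_add hA hB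
      _ = 2 * C * ((m : ℝ) + n) * (N1 / ((n : ℝ) - 1) + N2 / ((m : ℝ) - 1)) := by
          ring


end
end
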